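/- Let q be a prime power and W an m-dimensional F_q-subspace of F_{q^ℓ}, and a ∣ ℓ. Suppose dim_{F_q}(γF_{q^a} ∩ W) ∈ {0, 1} for every γ ∈ F_{q^ℓ}*. Then the number of γ ∈ F_{q^ℓ}* with dim_{F_q}(γF_{q^a} ∩ W) = 1 is exactly (q^a − 1)(q^m − 1)/(q − 1), and hence ∑_{γ ∈ F_{q^ℓ}*} dim_{F_q}(γF_{q^a} ∩ W) = (q^a − 1)(q^m − 1)/(q − 1). -/

import Mathlib

open Module Finset

section aux

variable {K F : Type*} [Field K] [Field F] [Algebra K F] [Fintype K] [Fintype F] [DecidableEq F]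

lemma aux_card_filter_mem (S : Submodule K F) [DecidablePred (· ∈ S)] :
    (univ.filter (fun w : F => w ∈ S)).card = Fintype.card K ^ finrank K S := by
  rw [← card_eq_pow_finrank (K := K) (V := S)]
  simp [Fintype.card_subtype]

lemma aux_card_filter_mem_ne (S : Submodule K F) [DecidablePred (· ∈ S)] :
    (univ.filter (fun w : F => w ∈ S ∧ w ≠ 0)).card = Fintype.card K ^ finrank K S - 1 := by
  have h : univ.filter (fun w : F => w ∈ S ∧ w ≠ 0)
      = (univ.filter (fun w : F => w ∈ S)).erase 0 := by
    ext w; simp [Finset.mem_erase, and_comm]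
  rw [h, Finset.card_erase_of_mem (by simp [S.zero_mem]), aux_card_filter_mem]

end aux

/-- if every intersection `γF_{q^a} ∩ W` has dimension `0` or `1`, then the
number of nonzero `γ` with `dim(γF_{q^a} ∩ W) = 1` is `(q^a − 1)(q^m − 1)/(q − 1)`, and
the sum of all these dimensions equals the same quantity. -/
theorem stmt5 {K F : Type*} [Field K] [Field F] [Algebra K F] [Fintype K] [Fintype F]
    [DecidableEq F]
    (q ℓ a m : ℕ) (hq : Fintype.card K = q) (hℓ : finrank K F = ℓ) (ha : a ∣ ℓ)
    (A : IntermediateField K F) (hA : finrank K A = a)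
    (W : Submodule K F) (hW : finrank K W = m)
    (h01 : ∀ γ : F, γ ≠ 0 →
      finrank K ↥((Subalgebra.toSubmodule A.toSubalgebra).map (LinearMap.mulLeft K γ) ⊓ W) ≤ 1) :
    (Finset.univ.filter (fun γ : F => γ ≠ 0 ∧
        finrank K ↥((Subalgebra.toSubmodule A.toSubalgebra).map (LinearMap.mulLeft K γ) ⊓ W)
          = 1)).card
      = (q ^ a - 1) * (q ^ m - 1) / (q - 1) ∧
    ∑ γ ∈ Finset.univ.filter (fun γ : F => γ ≠ 0),
      finrank K ↥((Subalgebra.toSubmodule A.toSubalgebra).map (LinearMap.mulLeft K γ) ⊓ W)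
      = (q ^ a - 1) * (q ^ m - 1) / (q - 1) := by
  classical
  set T : F → Submodule K F :=
    fun γ => (Subalgebra.toSubmodule A.toSubalgebra).map (LinearMap.mulLeft K γ) ⊓ W with hT
  set d : F → ℕ := fun γ => finrank K ↥(T γ) with hd
  have hq2 : 1 < q := hq ▸ Fintype.one_lt_card
  have hAs : finrank K ↥(Subalgebra.toSubmodule A.toSubalgebra) = a := hA
  -- inner count for fixed γ
  have hcγ : ∀ γ : F, (univ.filter (fun w : F => w ∈ T γ ∧ w ≠ 0)).card = q ^ d γ - 1 := by
    intro γ; rw [aux_card_filter_mem_ne (T γ), hq]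
  -- for nonzero γ, the inner count is (q-1) * d γ
  have hpow : ∀ γ : F, γ ≠ 0 → q ^ d γ - 1 = (q - 1) * d γ := by
    intro γ hγ
    have := h01 γ hγ
    have hle : d γ ≤ 1 := this
    have h' : d γ = 0 ∨ d γ = 1 := by omega
    rcases h' with h' | h' <;> rw [h'] <;> simp
  -- the double count
  have key : ∑ γ ∈ univ.filter (fun γ : F => γ ≠ 0),
      (univ.filter (fun w : F => w ∈ T γ ∧ w ≠ 0)).card = (q ^ m - 1) * (q ^ a - 1) := by
    -- rewrite as a double sum and swap
    have swap : ∑ γ ∈ univ.filter (fun γ : F => γ ≠ 0),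
        (univ.filter (fun w : F => w ∈ T γ ∧ w ≠ 0)).card
        = ∑ w : F, ((univ.filter (fun γ : F => γ ≠ 0)).filter
            (fun γ => w ∈ T γ ∧ w ≠ 0)).card := by
      simp only [Finset.card_filter]
      exact Finset.sum_comm
    rw [swap]
    have inner : ∀ w : F, ((univ.filter (fun γ : F => γ ≠ 0)).filter
        (fun γ => w ∈ T γ ∧ w ≠ 0)).card
        = if w ∈ W ∧ w ≠ 0 then q ^ a - 1 else 0 := by
      intro w
      by_cases hw : w ∈ W ∧ w ≠ 0
      · rw [if_pos hw]
        obtain ⟨hwW, hw0⟩ := hw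
        have hset : (univ.filter (fun γ : F => γ ≠ 0)).filter (fun γ => w ∈ T γ ∧ w ≠ 0)
            = univ.filter (fun γ : F => γ ≠ 0 ∧ γ⁻¹ * w ∈ A) := by
          ext γ
          simp only [Finset.mem_filter, Finset.mem_univ, true_and, hT, Submodule.mem_inf,
            Submodule.mem_map, Subalgebra.mem_toSubmodule, LinearMap.mulLeft_apply]
          constructor
          · rintro ⟨hγ, ⟨⟨x, hxA, hx⟩, -⟩, -⟩
            refine ⟨hγ, ?_⟩
            have : γ⁻¹ * w = x := by field_simp [← hx]; exact hx.symm
            rw [this]; exact hxA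
          · rintro ⟨hγ, hmem⟩
            exact ⟨hγ, ⟨⟨γ⁻¹ * w, hmem, by field_simp⟩, hwW⟩, hw0⟩
        rw [hset]
        have hcard : (univ.filter (fun x : F =>
            x ∈ (Subalgebra.toSubmodule A.toSubalgebra : Submodule K F) ∧ x ≠ 0)).card
            = q ^ a - 1 := by
          rw [aux_card_filter_mem_ne, hq, hAs]
        rw [← hcard]
        apply Finset.card_bij' (fun γ _ => γ⁻¹ * w) (fun x _ => w * x⁻¹)
        · intro γ hγ
          simp only [Finset.mem_filter, Finset.mem_univ, true_and] at hγ ⊢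
          exact ⟨hγ.2, mul_ne_zero (inv_ne_zero hγ.1) hw0⟩
        · intro x hx
          simp only [Finset.mem_filter, Finset.mem_univ, true_and,
            Subalgebra.mem_toSubmodule] at hx ⊢
          obtain ⟨hxA, hx0⟩ := hx
          refine ⟨mul_ne_zero hw0 (inv_ne_zero hx0), ?_⟩
          have : (w * x⁻¹)⁻¹ * w = x := by field_simp
          rw [this]; exact hxA
        · intro γ hγ
          simp only [Finset.mem_filter, Finset.mem_univ, true_and] at hγ
          field_simp
        · intro x hx
          simp only [Finset.mem_filter, Finset.mem_univ, true_and] at hx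
          field_simp
      · rw [if_neg hw]
        rw [Finset.card_eq_zero, Finset.filter_eq_empty_iff]
        intro γ hγ
        rintro ⟨hmem, hw0⟩
        exact hw ⟨(Submodule.mem_inf.mp hmem).2, hw0⟩
    rw [Finset.sum_congr rfl (fun w _ => inner w)]
    rw [Finset.sum_ite, Finset.sum_const, Finset.sum_const, smul_eq_mul, smul_eq_mul,
      mul_zero, add_zero]
    congr 1
    have : (univ.filter (fun w : F => w ∈ W ∧ w ≠ 0)).card = q ^ m - 1 := by
      rw [aux_card_filter_mem_ne, hq, hW]
    simpa using this
  -- sum of d over nonzero γ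
  have key2 : (q - 1) * ∑ γ ∈ univ.filter (fun γ : F => γ ≠ 0), d γ
      = (q ^ m - 1) * (q ^ a - 1) := by
    rw [Finset.mul_sum, ← key]
    apply Finset.sum_congr rfl
    intro γ hγ
    rw [Finset.mem_filter] at hγ
    rw [hcγ γ, hpow γ hγ.2]
  have hsum : ∑ γ ∈ univ.filter (fun γ : F => γ ≠ 0), d γ
      = (q ^ a - 1) * (q ^ m - 1) / (q - 1) := by
    have h1 : (q ^ a - 1) * (q ^ m - 1)
        = (q - 1) * ∑ γ ∈ univ.filter (fun γ : F => γ ≠ 0), d γ := by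
      rw [key2, mul_comm]
    rw [h1, Nat.mul_div_cancel_left _ (by omega : 0 < q - 1)]
  constructor
  · rw [← hsum]
    rw [Finset.card_filter, Finset.sum_filter]
    apply Finset.sum_congr rfl
    intro γ _
    by_cases hγ : γ = 0
    · simp [hγ]
    · have hle : d γ ≤ 1 := h01 γ hγ
      have h' : d γ = 0 ∨ d γ = 1 := by omega
      have e : (if γ ≠ 0 ∧ d γ = 1 then 1 else 0) = (if γ ≠ 0 then d γ else 0) := by
        rcases h' with h' | h' <;> simp [hγ, h']
      exact e
  · exact hsum
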